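/- Let S be a numerical semigroup with multiplicity 4 and Kunz-coordinates vector (x_1, x_2, x_3) ∈ ℕ³. Then S is 4-irreducible if and only if one of the following holds: (1) x_1 = x_2 = x_3 = 1; (2) x_1 + x_2 ≥ x_3 + 1, 2x_1 ≥ x_2 + 2, and x_2 + x_3 ≤ x_1 - 1; (3) x_1 + x_2 ≥ x_3 + 1, 2x_1 ≥ x_2 + 2, x_2 = 1 and 2x_3 ≤ x_2; (4) x_1 + x_2 ≥ x_3 + 1, 2x_1 ≥ x_2 + 2, x_2 = 1 and x_2 + x_3 ≤ x_1 - 1; (5) x_1 = 2, x_2 = x_3 = 1; (6) x_1 + x_2 ≥ x_3 + 1, x_2 + x_3 ≥ x_1, 2x_1 ≤ x_2 + 1 and 2x_3 ≤ x_2; (7) x_2 + x_3 ≥ x_1, 2x_3 ≥ x_2 + 1, and x_1 + x_2 ≤ x_3. -/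
import Mathlib
set_option maxHeartbeats 1000000


/-- A numerical semigroup: a subset of ℕ containing 0, closed under addition,
with finite complement. -/
def IsNumSgp (S : Set ℕ) : Prop :=
  0 ∈ S ∧ (∀ a ∈ S, ∀ b ∈ S, a + b ∈ S) ∧ (Sᶜ).Finite

/-- Multiplicity: least positive element. -/
noncomputable def nsMult (S : Set ℕ) : ℕ := sInf {n | n ∈ S ∧ 0 < n}

/-- Frobenius number: largest integer not in S. -/
noncomputable def nsFrob (S : Set ℕ) : ℕ := sSup Sᶜ

/-- Genus: number of gaps. -/
noncomputable def nsGenus (S : Set ℕ) : ℕ := Sᶜ.ncard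

/-- Special gaps of S. -/
def nsSG (S : Set ℕ) : Set ℕ := {h | h ∉ S ∧ IsNumSgp (S ∪ {h})}

/-- Special gaps of S larger than m. -/
def nsSGm (m : ℕ) (S : Set ℕ) : Set ℕ := {h ∈ nsSG S | m < h}

/-- S is irreducible: not an intersection of two numerical semigroups properly containing it. -/
def nsIrr (S : Set ℕ) : Prop :=
  ¬ ∃ T₁ T₂ : Set ℕ, IsNumSgp T₁ ∧ IsNumSgp T₂ ∧ S ⊂ T₁ ∧ S ⊂ T₂ ∧ S = T₁ ∩ T₂

/-- S is m-irreducible: not an intersection of two numerical semigroups of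
multiplicity m properly containing it. -/
def nsMIrr (m : ℕ) (S : Set ℕ) : Prop :=
  ¬ ∃ T₁ T₂ : Set ℕ, IsNumSgp T₁ ∧ IsNumSgp T₂ ∧ nsMult T₁ = m ∧ nsMult T₂ = m ∧
      S ⊂ T₁ ∧ S ⊂ T₂ ∧ S = T₁ ∩ T₂

/-- Symmetric: irreducible with odd Frobenius number. -/
def nsSym (S : Set ℕ) : Prop := nsIrr S ∧ Odd (nsFrob S)

/-- Pseudosymmetric: irreducible with even Frobenius number. -/
def nsPseudoSym (S : Set ℕ) : Prop := nsIrr S ∧ Even (nsFrob S)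

/-- m-symmetric: m-irreducible with odd Frobenius number. -/
def nsMSym (m : ℕ) (S : Set ℕ) : Prop := nsMIrr m S ∧ Odd (nsFrob S)

/-- m-pseudosymmetric: m-irreducible with even Frobenius number. -/
def nsMPseudoSym (m : ℕ) (S : Set ℕ) : Prop := nsMIrr m S ∧ Even (nsFrob S)

/-- The numerical semigroup (submonoid) generated by a set of naturals. -/
def nsGen (A : Set ℕ) : Set ℕ := (AddSubmonoid.closure A : Set ℕ)

/-- Apéry element: least element of S congruent to i mod m. -/
noncomputable def nsApery (S : Set ℕ) (m i : ℕ) : ℕ := sInf {s | s ∈ S ∧ s % m = i % m}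


/-- membership predicate for the multiplicity-4 numerical semigroup with
Kunz coordinates (y1,y2,y3) -/
def Kmem (y1 y2 y3 n : ℕ) : Prop :=
  n % 4 = 0 ∨ (n % 4 = 1 ∧ 4*y1+1 ≤ n) ∨ (n % 4 = 2 ∧ 4*y2+2 ≤ n) ∨ (n % 4 = 3 ∧ 4*y3+3 ≤ n)

/-- the Kunz inequalities for multiplicity 4 -/
def KunzI (y1 y2 y3 : ℕ) : Prop :=
  1 ≤ y1 ∧ 1 ≤ y2 ∧ 1 ≤ y3 ∧ y2 ≤ 2*y1 ∧ y3 ≤ y1+y2 ∧ y1 ≤ y2+y3+1 ∧ y2 ≤ 2*y3+1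

lemma mem_char (T : Set ℕ) (hT : IsNumSgp T) (hm4 : nsMult T = 4) :
    ∃ y1 y2 y3 : ℕ, nsApery T 4 1 = 4*y1+1 ∧ nsApery T 4 2 = 4*y2+2 ∧ nsApery T 4 3 = 4*y3+3 ∧
      KunzI y1 y2 y3 ∧ ∀ n, n ∈ T ↔ Kmem y1 y2 y3 n := by
  obtain ⟨h0, hadd, hfin⟩ := hT
  have big : ∀ n, sSup Tᶜ < n → n ∈ T := by
    intro n hn
    by_contra h
    exact absurd (le_csSup hfin.bddAbove h) (not_le.mpr hn)
  have hne : {n | n ∈ T ∧ 0 < n}.Nonempty :=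
    ⟨sSup Tᶜ + 1, big _ (lt_add_one _), Nat.succ_pos _⟩
  have h4T : 4 ∈ T := by
    have := Nat.sInf_mem hne
    rw [show sInf {n | n ∈ T ∧ 0 < n} = nsMult T from rfl, hm4] at this
    exact this.1
  have hge4 : ∀ n ∈ T, 0 < n → 4 ≤ n := by
    intro n hn hpos
    have : nsMult T ≤ n := Nat.sInf_le ⟨hn, hpos⟩
    omega
  have hmul : ∀ k, 4 * k ∈ T := by
    intro k
    induction k with
    | zero => simpa using h0
    | succ k ih =>
      have h := hadd _ ih _ h4T
      have e : 4 * (k+1) = 4 * k + 4 := by ring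
      rw [e]; exact h
  have hap : ∀ i : ℕ, i < 4 →
      nsApery T 4 i ∈ T ∧ nsApery T 4 i % 4 = i ∧ ∀ s ∈ T, s % 4 = i → nsApery T 4 i ≤ s := by
    intro i hi
    unfold nsApery
    have hne2 : {s | s ∈ T ∧ s % 4 = i % 4}.Nonempty :=
      ⟨4 * (sSup Tᶜ + 1) + i, big _ (by omega), by omega⟩
    have hmem := Nat.sInf_mem hne2
    refine ⟨hmem.1, ?_, fun s hs hsi => Nat.sInf_le ⟨hs, by omega⟩⟩
    have := hmem.2
    omega
  obtain ⟨m1, hm1, hl1⟩ := hap 1 (by norm_num)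
  obtain ⟨m2, hm2, hl2⟩ := hap 2 (by norm_num)
  obtain ⟨m3, hm3, hl3⟩ := hap 3 (by norm_num)
  refine ⟨nsApery T 4 1 / 4, nsApery T 4 2 / 4, nsApery T 4 3 / 4, by omega, by omega, by omega,
    ?_, ?_⟩
  · have g1 := hge4 _ m1 (by omega)
    have g2 := hge4 _ m2 (by omega)
    have g3 := hge4 _ m3 (by omega)
    have k11 := hl2 _ (hadd _ m1 _ m1) (by omega)
    have k12 := hl3 _ (hadd _ m1 _ m2) (by omega)
    have k23 := hl1 _ (hadd _ m2 _ m3) (by omega)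
    have k33 := hl2 _ (hadd _ m3 _ m3) (by omega)
    unfold KunzI
    omega
  · intro n
    constructor
    · intro hn
      have h4 : n % 4 < 4 := Nat.mod_lt _ (by norm_num)
      unfold Kmem
      rcases (by omega : n % 4 = 0 ∨ n % 4 = 1 ∨ n % 4 = 2 ∨ n % 4 = 3) with h | h | h | h
      · omega
      · have := hl1 n hn h; omega
      · have := hl2 n hn h; omega
      · have := hl3 n hn h; omega
    · intro hn
      unfold Kmem at hn
      rcases hn with h | ⟨h, hle⟩ | ⟨h, hle⟩ | ⟨h, hle⟩
      · have := hmul (n / 4); rwa [show 4 * (n/4) = n by omega] at this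
      · have : n = nsApery T 4 1 + 4 * ((n - nsApery T 4 1) / 4) := by omega
        rw [this]; exact hadd _ m1 _ (hmul _)
      · have : n = nsApery T 4 2 + 4 * ((n - nsApery T 4 2) / 4) := by omega
        rw [this]; exact hadd _ m2 _ (hmul _)
      · have : n = nsApery T 4 3 + 4 * ((n - nsApery T 4 3) / 4) := by omega
        rw [this]; exact hadd _ m3 _ (hmul _)

lemma kset_numsgp (y1 y2 y3 : ℕ) (hy : KunzI y1 y2 y3) :
    IsNumSgp {n | Kmem y1 y2 y3 n} ∧ nsMult {n | Kmem y1 y2 y3 n} = 4 := by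
  obtain ⟨a1, a2, a3, b1, b2, b3, b4⟩ := hy
  constructor
  · refine ⟨?_, ?_, ?_⟩
    · show Kmem y1 y2 y3 0; unfold Kmem; omega
    · intro a ha b hb
      simp only [Set.mem_setOf_eq, Kmem] at *
      omega
    · apply Set.Finite.subset (Set.finite_Iio (4*(y1+y2+y3)+16))
      intro n hn
      simp only [Set.mem_compl_iff, Set.mem_setOf_eq, Kmem] at hn
      simp only [Set.mem_Iio]
      omega
  · have h4 : (4:ℕ) ∈ {n | Kmem y1 y2 y3 n} := by show Kmem y1 y2 y3 4; unfold Kmem; omega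
    unfold nsMult
    apply le_antisymm (Nat.sInf_le (⟨h4, by norm_num⟩ :
      (4:ℕ) ∈ {n | n ∈ {n | Kmem y1 y2 y3 n} ∧ 0 < n}))
    have hne3 : {n | n ∈ {n | Kmem y1 y2 y3 n} ∧ 0 < n}.Nonempty := ⟨4, h4, by norm_num⟩
    have h44 : ∀ n ∈ {n | n ∈ {n | Kmem y1 y2 y3 n} ∧ 0 < n}, 4 ≤ n := by
      intro n hn
      simp only [Set.mem_setOf_eq, Kmem] at hn
      omega
    exact h44 _ (Nat.sInf_mem hne3)

lemma not_irr (S : Set ℕ) (x1 x2 x3 y1 y2 y3 z1 z2 z3 : ℕ)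
    (memS : ∀ n, n ∈ S ↔ Kmem x1 x2 x3 n)
    (hy : KunzI y1 y2 y3) (hz : KunzI z1 z2 z3)
    (hy1 : y1 ≤ x1) (hy2 : y2 ≤ x2) (hy3 : y3 ≤ x3)
    (hz1 : z1 ≤ x1) (hz2 : z2 ≤ x2) (hz3 : z3 ≤ x3)
    (hyne : ¬(y1 = x1 ∧ y2 = x2 ∧ y3 = x3)) (hzne : ¬(z1 = x1 ∧ z2 = x2 ∧ z3 = x3))
    (hmax1 : max y1 z1 = x1) (hmax2 : max y2 z2 = x2) (hmax3 : max y3 z3 = x3) :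
    ¬ nsMIrr 4 S := by
  obtain ⟨hT1, hmu1⟩ := kset_numsgp y1 y2 y3 hy
  obtain ⟨hT2, hmu2⟩ := kset_numsgp z1 z2 z3 hz
  intro h
  apply h
  refine ⟨_, _, hT1, hT2, hmu1, hmu2, ?_, ?_, ?_⟩
  · rw [Set.ssubset_iff_subset_ne]
    constructor
    · intro n hn
      rw [memS] at hn
      show Kmem y1 y2 y3 n
      unfold Kmem at *
      omega
    · intro heq
      apply hyne
      have e1 : (4*y1+1) ∈ {n | Kmem y1 y2 y3 n} := by show Kmem y1 y2 y3 _; unfold Kmem; omega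
      have e2 : (4*y2+2) ∈ {n | Kmem y1 y2 y3 n} := by show Kmem y1 y2 y3 _; unfold Kmem; omega
      have e3 : (4*y3+3) ∈ {n | Kmem y1 y2 y3 n} := by show Kmem y1 y2 y3 _; unfold Kmem; omega
      rw [← heq, memS] at e1 e2 e3
      unfold Kmem at e1 e2 e3
      omega
  · rw [Set.ssubset_iff_subset_ne]
    constructor
    · intro n hn
      rw [memS] at hn
      show Kmem z1 z2 z3 n
      unfold Kmem at *
      omega
    · intro heq
      apply hzne
      have e1 : (4*z1+1) ∈ {n | Kmem z1 z2 z3 n} := by show Kmem z1 z2 z3 _; unfold Kmem; omega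
      have e2 : (4*z2+2) ∈ {n | Kmem z1 z2 z3 n} := by show Kmem z1 z2 z3 _; unfold Kmem; omega
      have e3 : (4*z3+3) ∈ {n | Kmem z1 z2 z3 n} := by show Kmem z1 z2 z3 _; unfold Kmem; omega
      rw [← heq, memS] at e1 e2 e3
      unfold Kmem at e1 e2 e3
      omega
  · ext n
    rw [memS]
    simp only [Set.mem_inter_iff, Set.mem_setOf_eq]
    unfold Kmem
    omega


lemma kmem_ai1 (w1 w2 w3 u : ℕ) (h : w1 ≤ u) : Kmem w1 w2 w3 (4*u+1) := by unfold Kmem; omega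
lemma kmem_ai2 (w1 w2 w3 u : ℕ) (h : w2 ≤ u) : Kmem w1 w2 w3 (4*u+2) := by unfold Kmem; omega
lemma kmem_ai3 (w1 w2 w3 u : ℕ) (h : w3 ≤ u) : Kmem w1 w2 w3 (4*u+3) := by unfold Kmem; omega
lemma kmem_le1 (w1 w2 w3 u : ℕ) (h : Kmem w1 w2 w3 (4*u+1)) : w1 ≤ u := by unfold Kmem at h; omega
lemma kmem_le2 (w1 w2 w3 u : ℕ) (h : Kmem w1 w2 w3 (4*u+2)) : w2 ≤ u := by unfold Kmem at h; omega
lemma kmem_le3 (w1 w2 w3 u : ℕ) (h : Kmem w1 w2 w3 (4*u+3)) : w3 ≤ u := by unfold Kmem at h; omega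

lemma arith_two (x1 x2 x3 : ℕ)
    (k1 : 1 ≤ x1) (k2 : 1 ≤ x2) (k3 : 1 ≤ x3) (k4 : x2 ≤ 2*x1) (k5 : x3 ≤ x1+x2)
    (k6 : x1 ≤ x2+x3+1) (k7 : x2 ≤ 2*x3+1)
    (n1 : ¬(x1 = 1 ∧ x2 = 1 ∧ x3 = 1))
    (n2 : ¬(x1 + x2 ≥ x3 + 1 ∧ 2 * x1 ≥ x2 + 2 ∧ x2 + x3 ≤ x1 - 1))
    (n5 : ¬(x1 = 2 ∧ x2 = 1 ∧ x3 = 1))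
    (n6 : ¬(x1 + x2 ≥ x3 + 1 ∧ x2 + x3 ≥ x1 ∧ 2 * x1 ≤ x2 + 1 ∧ 2 * x3 ≤ x2))
    (n7 : ¬(x2 + x3 ≥ x1 ∧ 2 * x3 ≥ x2 + 1 ∧ x1 + x2 ≤ x3)) :
    ((2 ≤ x1 ∧ x2+2 ≤ 2*x1 ∧ x3+1 ≤ x1+x2) ∧ (2 ≤ x2 ∧ x3+1 ≤ x1+x2 ∧ x1 ≤ x2+x3)) ∨
    ((2 ≤ x1 ∧ x2+2 ≤ 2*x1 ∧ x3+1 ≤ x1+x2) ∧ (2 ≤ x3 ∧ x1 ≤ x2+x3 ∧ x2+1 ≤ 2*x3)) ∨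
    ((2 ≤ x2 ∧ x3+1 ≤ x1+x2 ∧ x1 ≤ x2+x3) ∧ (2 ≤ x3 ∧ x1 ≤ x2+x3 ∧ x2+1 ≤ 2*x3)) := by
  rcases le_or_gt (x3+1) (x1+x2) with A | A <;>
  rcases le_or_gt (x2+2) (2*x1) with B | B <;>
  rcases le_or_gt x1 (x2+x3) with C | C <;>
  rcases le_or_gt (x2+1) (2*x3) with D | D <;>
  omega

lemma arith_claim (x1 x2 x3 y1 y2 y3 : ℕ)
    (k1 : 1 ≤ x1) (k2 : 1 ≤ x2) (k3 : 1 ≤ x3) (k4 : x2 ≤ 2*x1) (k5 : x3 ≤ x1+x2)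
    (k6 : x1 ≤ x2+x3+1) (k7 : x2 ≤ 2*x3+1)
    (l1 : 1 ≤ y1) (l2 : 1 ≤ y2) (l3 : 1 ≤ y3) (l4 : y2 ≤ 2*y1) (l5 : y3 ≤ y1+y2)
    (l6 : y1 ≤ y2+y3+1) (l7 : y2 ≤ 2*y3+1)
    (hy1 : y1 ≤ x1) (hy2 : y2 ≤ x2) (hy3 : y3 ≤ x3)
    (hyne : ¬(y1 = x1 ∧ y2 = x2 ∧ y3 = x3)) :
    (y1 < x1 ∧ (2 ≤ x1 ∧ x2+2 ≤ 2*x1 ∧ x3+1 ≤ x1+x2)) ∨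
    (y2 < x2 ∧ (2 ≤ x2 ∧ x3+1 ≤ x1+x2 ∧ x1 ≤ x2+x3)) ∨
    (y3 < x3 ∧ (2 ≤ x3 ∧ x1 ≤ x2+x3 ∧ x2+1 ≤ 2*x3)) := by
  omega

lemma arith_hnot (x1 x2 x3 : ℕ)
    (k1 : 1 ≤ x1) (k2 : 1 ≤ x2) (k3 : 1 ≤ x3) (k4 : x2 ≤ 2*x1) (k5 : x3 ≤ x1+x2)
    (k6 : x1 ≤ x2+x3+1) (k7 : x2 ≤ 2*x3+1)
    (hrhs : (x1 = 1 ∧ x2 = 1 ∧ x3 = 1) ∨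
      (x1 + x2 ≥ x3 + 1 ∧ 2 * x1 ≥ x2 + 2 ∧ x2 + x3 ≤ x1 - 1) ∨
      (x1 + x2 ≥ x3 + 1 ∧ 2 * x1 ≥ x2 + 2 ∧ x2 = 1 ∧ 2 * x3 ≤ x2) ∨
      (x1 + x2 ≥ x3 + 1 ∧ 2 * x1 ≥ x2 + 2 ∧ x2 = 1 ∧ x2 + x3 ≤ x1 - 1) ∨
      (x1 = 2 ∧ x2 = 1 ∧ x3 = 1) ∨
      (x1 + x2 ≥ x3 + 1 ∧ x2 + x3 ≥ x1 ∧ 2 * x1 ≤ x2 + 1 ∧ 2 * x3 ≤ x2) ∨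
      (x2 + x3 ≥ x1 ∧ 2 * x3 ≥ x2 + 1 ∧ x1 + x2 ≤ x3)) :
    ¬(((2 ≤ x1 ∧ x2+2 ≤ 2*x1 ∧ x3+1 ≤ x1+x2) ∧ (2 ≤ x2 ∧ x3+1 ≤ x1+x2 ∧ x1 ≤ x2+x3)) ∨
      ((2 ≤ x1 ∧ x2+2 ≤ 2*x1 ∧ x3+1 ≤ x1+x2) ∧ (2 ≤ x3 ∧ x1 ≤ x2+x3 ∧ x2+1 ≤ 2*x3)) ∨
      ((2 ≤ x2 ∧ x3+1 ≤ x1+x2 ∧ x1 ≤ x2+x3) ∧ (2 ≤ x3 ∧ x1 ≤ x2+x3 ∧ x2+1 ≤ 2*x3))) := by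
  rcases hrhs with h | h | h | h | h | h | h <;> omega

/-- 4-irreducibility of a multiplicity-4 numerical semigroup in
terms of its Kunz coordinates. -/
theorem stmt16 (S : Set ℕ) (x1 x2 x3 : ℕ) (hS : IsNumSgp S) (hm : nsMult S = 4)
    (h1 : nsApery S 4 1 = 4 * x1 + 1) (h2 : nsApery S 4 2 = 4 * x2 + 2)
    (h3 : nsApery S 4 3 = 4 * x3 + 3) :
    nsMIrr 4 S ↔
      (x1 = 1 ∧ x2 = 1 ∧ x3 = 1) ∨
      (x1 + x2 ≥ x3 + 1 ∧ 2 * x1 ≥ x2 + 2 ∧ x2 + x3 ≤ x1 - 1) ∨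
      (x1 + x2 ≥ x3 + 1 ∧ 2 * x1 ≥ x2 + 2 ∧ x2 = 1 ∧ 2 * x3 ≤ x2) ∨
      (x1 + x2 ≥ x3 + 1 ∧ 2 * x1 ≥ x2 + 2 ∧ x2 = 1 ∧ x2 + x3 ≤ x1 - 1) ∨
      (x1 = 2 ∧ x2 = 1 ∧ x3 = 1) ∨
      (x1 + x2 ≥ x3 + 1 ∧ x2 + x3 ≥ x1 ∧ 2 * x1 ≤ x2 + 1 ∧ 2 * x3 ≤ x2) ∨
      (x2 + x3 ≥ x1 ∧ 2 * x3 ≥ x2 + 1 ∧ x1 + x2 ≤ x3) := by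
  obtain ⟨u1, u2, u3, a1, a2, a3, hKx, memS⟩ := mem_char S hS hm
  rw [h1] at a1; rw [h2] at a2; rw [h3] at a3
  have e1 : u1 = x1 := by omega
  have e2 : u2 = x2 := by omega
  have e3 : u3 = x3 := by omega
  rw [e1] at hKx memS; rw [e2] at hKx memS; rw [e3] at hKx memS
  obtain ⟨k1, k2, k3, k4, k5, k6, k7⟩ := hKx
  constructor
  · intro hirr
    by_contra hcon
    have n1 : ¬(x1 = 1 ∧ x2 = 1 ∧ x3 = 1) := fun h => hcon (Or.inl h)
    have n2 : ¬(x1 + x2 ≥ x3 + 1 ∧ 2 * x1 ≥ x2 + 2 ∧ x2 + x3 ≤ x1 - 1) :=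
      fun h => hcon (Or.inr (Or.inl h))
    have n5 : ¬(x1 = 2 ∧ x2 = 1 ∧ x3 = 1) :=
      fun h => hcon (Or.inr (Or.inr (Or.inr (Or.inr (Or.inl h)))))
    have n6 : ¬(x1 + x2 ≥ x3 + 1 ∧ x2 + x3 ≥ x1 ∧ 2 * x1 ≤ x2 + 1 ∧ 2 * x3 ≤ x2) :=
      fun h => hcon (Or.inr (Or.inr (Or.inr (Or.inr (Or.inr (Or.inl h))))))
    have n7 : ¬(x2 + x3 ≥ x1 ∧ 2 * x3 ≥ x2 + 1 ∧ x1 + x2 ≤ x3) :=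
      fun h => hcon (Or.inr (Or.inr (Or.inr (Or.inr (Or.inr (Or.inr h))))))
    clear hcon
    have htwo := arith_two x1 x2 x3 k1 k2 k3 k4 k5 k6 k7 n1 n2 n5 n6 n7
    clear n1 n2 n5 n6 n7
    rcases htwo with ⟨hA, hB⟩ | ⟨hA, hB⟩ | ⟨hA, hB⟩
    · exact not_irr S x1 x2 x3 (x1-1) x2 x3 x1 (x2-1) x3 memS
        (by unfold KunzI; omega) (by unfold KunzI; omega)
        (by omega) (by omega) (by omega) (by omega) (by omega) (by omega)
        (by omega) (by omega) (by omega) (by omega) (by omega) hirr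
    · exact not_irr S x1 x2 x3 (x1-1) x2 x3 x1 x2 (x3-1) memS
        (by unfold KunzI; omega) (by unfold KunzI; omega)
        (by omega) (by omega) (by omega) (by omega) (by omega) (by omega)
        (by omega) (by omega) (by omega) (by omega) (by omega) hirr
    · exact not_irr S x1 x2 x3 x1 (x2-1) x3 x1 x2 (x3-1) memS
        (by unfold KunzI; omega) (by unfold KunzI; omega)
        (by omega) (by omega) (by omega) (by omega) (by omega) (by omega)
        (by omega) (by omega) (by omega) (by omega) (by omega) hirr
  · intro hrhs
    have hnot := arith_hnot x1 x2 x3 k1 k2 k3 k4 k5 k6 k7 hrhs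
    clear hrhs
    rintro ⟨T₁, T₂, hT₁, hT₂, hmu₁, hmu₂, hs₁, hs₂, heq⟩
    obtain ⟨y1, y2, y3, _, _, _, hKy, memT₁⟩ := mem_char T₁ hT₁ hmu₁
    obtain ⟨z1, z2, z3, _, _, _, hKz, memT₂⟩ := mem_char T₂ hT₂ hmu₂
    have sub1 := hs₁.subset
    have sub2 := hs₂.subset
    have hin1 : (4*x1+1) ∈ S := (memS _).mpr (kmem_ai1 x1 x2 x3 x1 le_rfl)
    have hin2 : (4*x2+2) ∈ S := (memS _).mpr (kmem_ai2 x1 x2 x3 x2 le_rfl)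
    have hin3 : (4*x3+3) ∈ S := (memS _).mpr (kmem_ai3 x1 x2 x3 x3 le_rfl)
    have hy1 : y1 ≤ x1 := kmem_le1 _ _ _ _ ((memT₁ _).mp (sub1 hin1))
    have hy2 : y2 ≤ x2 := kmem_le2 _ _ _ _ ((memT₁ _).mp (sub1 hin2))
    have hy3 : y3 ≤ x3 := kmem_le3 _ _ _ _ ((memT₁ _).mp (sub1 hin3))
    have hz1 : z1 ≤ x1 := kmem_le1 _ _ _ _ ((memT₂ _).mp (sub2 hin1))
    have hz2 : z2 ≤ x2 := kmem_le2 _ _ _ _ ((memT₂ _).mp (sub2 hin2))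
    have hz3 : z3 ≤ x3 := kmem_le3 _ _ _ _ ((memT₂ _).mp (sub2 hin3))
    have hyne : ¬(y1 = x1 ∧ y2 = x2 ∧ y3 = x3) := by
      rintro ⟨rfl, rfl, rfl⟩
      exact hs₁.ne (Set.ext fun n => (memS n).trans ((memT₁ n).symm))
    have hzne : ¬(z1 = x1 ∧ z2 = x2 ∧ z3 = x3) := by
      rintro ⟨rfl, rfl, rfl⟩
      exact hs₂.ne (Set.ext fun n => (memS n).trans ((memT₂ n).symm))
    have hmax1 : x1 ≤ max y1 z1 := by
      have hmemi : (4*max y1 z1+1) ∈ T₁ ∩ T₂ :=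
        ⟨(memT₁ _).mpr (kmem_ai1 y1 y2 y3 _ (le_max_left _ _)),
         (memT₂ _).mpr (kmem_ai1 z1 z2 z3 _ (le_max_right _ _))⟩
      rw [← heq] at hmemi
      exact kmem_le1 _ _ _ _ ((memS _).mp hmemi)
    have hmax2 : x2 ≤ max y2 z2 := by
      have hmemi : (4*max y2 z2+2) ∈ T₁ ∩ T₂ :=
        ⟨(memT₁ _).mpr (kmem_ai2 y1 y2 y3 _ (le_max_left _ _)),
         (memT₂ _).mpr (kmem_ai2 z1 z2 z3 _ (le_max_right _ _))⟩
      rw [← heq] at hmemi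
      exact kmem_le2 _ _ _ _ ((memS _).mp hmemi)
    have hmax3 : x3 ≤ max y3 z3 := by
      have hmemi : (4*max y3 z3+3) ∈ T₁ ∩ T₂ :=
        ⟨(memT₁ _).mpr (kmem_ai3 y1 y2 y3 _ (le_max_left _ _)),
         (memT₂ _).mpr (kmem_ai3 z1 z2 z3 _ (le_max_right _ _))⟩
      rw [← heq] at hmemi
      exact kmem_le3 _ _ _ _ ((memS _).mp hmemi)
    obtain ⟨l1, l2, l3, l4, l5, l6, l7⟩ := hKy
    obtain ⟨m1, m2, m3, m4, m5, m6, m7⟩ := hKz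
    have claimY := arith_claim x1 x2 x3 y1 y2 y3 k1 k2 k3 k4 k5 k6 k7
      l1 l2 l3 l4 l5 l6 l7 hy1 hy2 hy3 hyne
    have claimZ := arith_claim x1 x2 x3 z1 z2 z3 k1 k2 k3 k4 k5 k6 k7
      m1 m2 m3 m4 m5 m6 m7 hz1 hz2 hz3 hzne
    apply hnot
    rcases claimY with ⟨hw, hL⟩ | ⟨hw, hL⟩ | ⟨hw, hL⟩ <;>
      rcases claimZ with ⟨hv, hM⟩ | ⟨hv, hM⟩ | ⟨hv, hM⟩
    · exact absurd hmax1 (not_le.mpr (max_lt hw hv))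
    · exact Or.inl ⟨hL, hM⟩
    · exact Or.inr (Or.inl ⟨hL, hM⟩)
    · exact Or.inl ⟨hM, hL⟩
    · exact absurd hmax2 (not_le.mpr (max_lt hw hv))
    · exact Or.inr (Or.inr ⟨hL, hM⟩)
    · exact Or.inr (Or.inl ⟨hM, hL⟩)
    · exact Or.inr (Or.inr ⟨hM, hL⟩)
    · exact absurd hmax3 (not_le.mpr (max_lt hw hv))
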